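/- The number of weakly increasing (m,n)-parking words (i.e., (m,n)-Dyck words) with gcd(m,n) = 1 equals the rational Catalan number (1/(m+n))·C(m+n, n). -/

import Mathlib

def IsParkingWord (m n : ℕ) (p : Fin n → ℕ) : Prop :=
  (∀ j, p j < m) ∧
  ∀ i : ℕ, 1 ≤ i → i ≤ m →
    i * n ≤ m * (Finset.univ.filter (fun j => p j < i)).card

open Fin.NatCast Fin.CommRing

namespace RatCat

open Finset

variable {N : ℕ} [NeZero N]

/-- Number of `x ∈ [0,a)` whose residue mod `N` lies in `S`. -/
def cnt (S : Finset (Fin N)) (a : ℕ) : ℕ :=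
  ((Finset.range a).filter fun x : ℕ => ((x : Fin N) ∈ S)).card

/-- The height function of the cyclic word determined by `S`. -/
def Hf (n : ℕ) (S : Finset (Fin N)) (a : ℕ) : ℤ :=
  (N : ℤ) * cnt S a - (n : ℤ) * a

/-- The Dyck condition for a subset of `Fin N`. -/
def Dy (n : ℕ) (S : Finset (Fin N)) : Prop :=
  ∀ x ∈ S, 0 ≤ Hf n S x.val

/-- Rotation of a subset of `Fin N`. -/
def rot (u : Fin N) (S : Finset (Fin N)) : Finset (Fin N) :=
  S.image (· + u)

lemma hNpos : 0 < N := Nat.pos_of_ne_zero (NeZero.ne N)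

lemma cnt_zero (S : Finset (Fin N)) : cnt S 0 = 0 := by simp [cnt]

lemma cnt_succ (S : Finset (Fin N)) (a : ℕ) :
    cnt S (a + 1) = cnt S a + (if (a : Fin N) ∈ S then 1 else 0) := by
  unfold cnt
  rw [Finset.range_add_one, Finset.filter_insert]
  split
  · rw [Finset.card_insert_of_notMem (by simp)]
  · simp

lemma cnt_split (S : Finset (Fin N)) (a b : ℕ) :
    cnt S (a + b) = cnt S a + ((Finset.Ico a (a + b)).filter fun x : ℕ => ((x : Fin N) ∈ S)).card := by
  unfold cnt
  rw [Finset.range_eq_Ico,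
    ← Finset.Ico_union_Ico_eq_Ico (Nat.zero_le a) (Nat.le_add_right a b),
    Finset.filter_union, Finset.card_union_of_disjoint]
  rw [Finset.range_eq_Ico]
  exact Finset.disjoint_filter_filter
    (Finset.Ico_disjoint_Ico_consecutive 0 a (a + b))

lemma filter_Ico_card (S : Finset (Fin N)) (a : ℕ) :
    ((Finset.Ico a (a + N)).filter fun x : ℕ => ((x : Fin N) ∈ S)).card = S.card := by
  refine Finset.card_bij (fun x _ => ((x : Fin N))) ?_ ?_ ?_
  · intro x hx; exact (Finset.mem_filter.mp hx).2
  · intro x hx y hy h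
    simp only [Finset.mem_filter, Finset.mem_Ico] at hx hy
    have hv : x % N = y % N := by
      have := congrArg Fin.val h
      simpa [Fin.val_natCast] using this
    rcases le_total x y with hle | hle
    · have hdvd : N ∣ y - x := (Nat.modEq_iff_dvd' hle).mp hv
      have : y - x = 0 := Nat.eq_zero_of_dvd_of_lt hdvd (by omega) |>.symm ▸ rfl
      omega
    · have hdvd : N ∣ x - y := (Nat.modEq_iff_dvd' hle).mp hv.symm
      have hlt : x - y < N := by omega
      have : x - y = 0 := by
        rcases Nat.eq_zero_or_pos (x - y) with h0 | h0
        · exact h0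
        · exact absurd (Nat.le_of_dvd h0 hdvd) (by omega)
      omega
  · intro z hz
    refine ⟨a + (z - (a : Fin N)).val, ?_, ?_⟩
    · have hlt : (z - (a : Fin N)).val < N := (z - (a : Fin N)).isLt
      rw [Finset.mem_filter]
      constructor
      · rw [Finset.mem_Ico]; omega
      · have : ((a + (z - (a : Fin N)).val : ℕ) : Fin N) = z := by
          push_cast
          ring
        rwa [this]
    · push_cast
      ring

lemma cnt_add_N (S : Finset (Fin N)) (a : ℕ) :
    cnt S (a + N) = cnt S a + S.card := by
  rw [cnt_split, filter_Ico_card]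

lemma cnt_N (S : Finset (Fin N)) : cnt S N = S.card := by
  have := cnt_add_N S 0
  simpa [cnt_zero] using this

lemma cnt_mono (S : Finset (Fin N)) : Monotone (cnt S) := by
  intro a b hab
  exact Finset.card_le_card (Finset.filter_subset_filter _
    (Finset.range_subset_range.mpr hab))

lemma Hf_add_N {n : ℕ} {S : Finset (Fin N)} (hS : S.card = n) (a : ℕ) :
    Hf n S (a + N) = Hf n S a := by
  unfold Hf
  rw [cnt_add_N, hS]
  push_cast
  ring

lemma Hf_mod {n : ℕ} {S : Finset (Fin N)} (hS : S.card = n) (a : ℕ) :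
    Hf n S a = Hf n S (a % N) := by
  have key : ∀ q r, Hf n S (r + N * q) = Hf n S r := by
    intro q
    induction q with
    | zero => simp
    | succ q ih =>
      intro r
      have : r + N * (q + 1) = (r + N * q) + N := by ring
      rw [this, Hf_add_N hS, ih]
  conv_lhs => rw [← Nat.mod_add_div a N]
  exact key _ _

lemma Hf_N {n : ℕ} {S : Finset (Fin N)} (hS : S.card = n) : Hf n S N = 0 := by
  unfold Hf
  rw [cnt_N, hS]
  ring

lemma Hf_inj {n : ℕ} {S : Finset (Fin N)} (hcop : Nat.Coprime n N) (hS : S.card = n)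
    {a b : ℕ} (ha : a < N) (hb : b < N) (hab : Hf n S a = Hf n S b) : a = b := by
  have h1 : (N : ℤ) ∣ (n : ℤ) * ((a : ℤ) - (b : ℤ)) := by
    refine ⟨(cnt S a : ℤ) - (cnt S b : ℤ), ?_⟩
    unfold Hf at hab
    linarith
  have hc : IsCoprime (N : ℤ) (n : ℤ) := Nat.isCoprime_iff_coprime.mpr hcop.symm
  have h2 : (N : ℤ) ∣ ((a : ℤ) - (b : ℤ)) := hc.dvd_of_dvd_mul_left h1
  have h3 : (N : ℕ) ∣ ((a : ℤ) - (b : ℤ)).natAbs := by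
    have := Int.natAbs_dvd_natAbs.mpr h2
    simpa using this
  have h4 : ((a : ℤ) - (b : ℤ)).natAbs < N := by omega
  have h5 : ((a : ℤ) - (b : ℤ)).natAbs = 0 := by
    rcases Nat.eq_zero_or_pos (((a : ℤ) - (b : ℤ)).natAbs) with h0 | h0
    · exact h0
    · exact absurd (Nat.le_of_dvd h0 h3) (by omega)
  omega

lemma mem_rot {u : Fin N} {S : Finset (Fin N)} {x : Fin N} :
    x ∈ rot u S ↔ x - u ∈ S := by
  unfold rot
  simp only [Finset.mem_image]
  constructor
  · rintro ⟨y, hy, rfl⟩; simpa using hy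
  · intro h; exact ⟨x - u, h, by ring⟩

lemma rot_card (u : Fin N) (S : Finset (Fin N)) : (rot u S).card = S.card :=
  Finset.card_image_of_injective _ (add_left_injective u)

lemma rot_rot (u v : Fin N) (S : Finset (Fin N)) :
    rot v (rot u S) = rot (u + v) S := by
  unfold rot
  rw [Finset.image_image]
  congr 1
  funext x
  simp [add_assoc]

lemma rot_zero (S : Finset (Fin N)) : rot 0 S = S := by
  simp [rot]

lemma cnt_rot (u : Fin N) (S : Finset (Fin N)) (a : ℕ) :
    cnt S ((-u).val) + cnt (rot u S) a = cnt S (a + (-u).val) := by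
  set w := (-u).val with hw
  have hwcast : ((w : ℕ) : Fin N) = -u := Fin.cast_val_eq_self (-u)
  rw [Nat.add_comm a w, cnt_split]
  congr 1
  unfold cnt
  refine Finset.card_bij (fun x _ => x + w) ?_ ?_ ?_
  · intro x hx
    simp only [Finset.mem_filter, Finset.mem_range] at hx
    simp only [Finset.mem_filter, Finset.mem_Ico]
    refine ⟨⟨Nat.le_add_left _ _, by omega⟩, ?_⟩
    have : ((x + w : ℕ) : Fin N) = (x : Fin N) - u := by
      push_cast
      rw [hwcast]
      ring
    rw [this]
    exact mem_rot.mp hx.2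
  · intro x _ y _ h
    have h' : x + w = y + w := h
    omega
  · intro y hy
    simp only [Finset.mem_filter, Finset.mem_Ico] at hy
    refine ⟨y - w, ?_, show y - w + w = y by omega⟩
    simp only [Finset.mem_filter, Finset.mem_range]
    refine ⟨by omega, ?_⟩
    rw [mem_rot]
    have : ((y - w : ℕ) : Fin N) - u = ((y : ℕ) : Fin N) := by
      have h1 : ((y - w : ℕ) : Fin N) = ((y : ℕ) : Fin N) - ((w : ℕ) : Fin N) := by
        have : (y - w) + w = y := by omega
        have h2 : (((y - w) + w : ℕ) : Fin N) = ((y : ℕ) : Fin N) := by rw [this]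
        push_cast at h2
        linear_combination h2
      rw [h1, hwcast]
      ring
    rw [this]
    exact hy.2

lemma Hf_rot {n : ℕ} (u : Fin N) (S : Finset (Fin N)) (a : ℕ) :
    Hf n (rot u S) a = Hf n S (a + (-u).val) - Hf n S ((-u).val) := by
  have h := cnt_rot u S a
  have h' : ((cnt S ((-u).val) : ℤ)) + (cnt (rot u S) a : ℤ) = (cnt S (a + (-u).val) : ℤ) := by
    exact_mod_cast congrArg (Nat.cast : ℕ → ℤ) h
  unfold Hf
  push_cast
  linear_combination (N : ℤ) * h'

lemma Dy_iff_nonneg {n : ℕ} {S : Finset (Fin N)} (hS : S.card = n) :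
    Dy n S ↔ ∀ a ≤ N, 0 ≤ Hf n S a := by
  constructor
  · intro hDy
    have key : ∀ k a, a + k = N → 0 ≤ Hf n S a := by
      intro k
      induction k with
      | zero =>
        intro a ha
        have : a = N := by omega
        rw [this, Hf_N hS]
      | succ k ih =>
        intro a ha
        have haN : a < N := by omega
        by_cases hmem : (a : Fin N) ∈ S
        · have := hDy _ hmem
          rwa [Fin.val_natCast, Nat.mod_eq_of_lt haN] at this
        · have h1 : cnt S (a + 1) = cnt S a := by
            rw [cnt_succ, if_neg hmem, Nat.add_zero]
          have h2 : Hf n S (a + 1) = Hf n S a - n := by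
            unfold Hf
            rw [h1]
            push_cast
            ring
          have h3 := ih (a + 1) (by omega)
          have h4 : (0 : ℤ) ≤ n := Int.natCast_nonneg n
          linarith
    intro a ha
    exact key (N - a) a (by omega)
  · intro h x hx
    exact h x.val (le_of_lt x.isLt)

lemma exists_unique_rot {n : ℕ} (hcop : Nat.Coprime n N) (T : Finset (Fin N))
    (hT : T.card = n) : ∃! u : Fin N, Dy n (rot u T) := by
  obtain ⟨t0, ht0mem, ht0min⟩ :=
    Finset.exists_min_image (Finset.range N) (Hf n T) ⟨0, Finset.mem_range.mpr hNpos⟩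
  have ht0N : t0 < N := Finset.mem_range.mp ht0mem
  have hmin : ∀ a : ℕ, Hf n T t0 ≤ Hf n T a := by
    intro a
    rw [Hf_mod hT a]
    exact ht0min _ (Finset.mem_range.mpr (Nat.mod_lt a hNpos))
  -- characterization
  have hchar : ∀ u : Fin N, Dy n (rot u T) ↔ (-u).val = t0 := by
    intro u
    set w := (-u).val with hw
    have hwN : w < N := (-u).isLt
    have hrcard : (rot u T).card = n := by rw [rot_card, hT]
    rw [Dy_iff_nonneg hrcard]
    have heq : ∀ a : ℕ, Hf n (rot u T) a = Hf n T (a + w) - Hf n T w :=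
      fun a => Hf_rot u T a
    constructor
    · intro h
      by_contra hne
      -- take a with a + w ≡ t0 mod N
      set a := (t0 + N - w) % N with ha
      have haN : a < N := Nat.mod_lt _ hNpos
      have hmod : (a + w) % N = t0 := by
        have h1 : (a + w) % N = ((t0 + N - w) + w) % N := by
          rw [ha, Nat.mod_add_mod]
        rw [h1]
        have : t0 + N - w + w = t0 + N := by omega
        rw [this, Nat.add_mod_right, Nat.mod_eq_of_lt ht0N]
      have h2 := h a (le_of_lt haN)
      rw [heq a] at h2
      have h3 : Hf n T (a + w) = Hf n T t0 := by
        rw [Hf_mod hT (a + w), hmod]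
      rw [h3] at h2
      have h4 := hmin w
      have h5 : Hf n T w = Hf n T t0 := le_antisymm (by linarith) h4
      exact hne (Hf_inj hcop hT hwN ht0N h5)
    · intro hwt a _
      rw [heq a, hwt]
      have := hmin (a + t0)
      linarith
  refine ⟨-((t0 : Fin N)), (hchar _).mpr ?_, fun u hu => ?_⟩
  · rw [neg_neg, Fin.val_natCast, Nat.mod_eq_of_lt ht0N]
  · have hu' := (hchar u).mp hu
    have : -u = ((t0 : Fin N)) := by
      have := congrArg (fun x : ℕ => ((x : Fin N))) hu'
      simpa [Fin.cast_val_eq_self] using this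
    have := congrArg Neg.neg this
    simpa [neg_neg] using this

lemma rot_count {n : ℕ} (hcop : Nat.Coprime n N) :
    N * Nat.card {S : Finset (Fin N) // S.card = n ∧ Dy n S} = N.choose n := by
  classical
  have hbij : Function.Bijective
      (fun x : Fin N × {S : Finset (Fin N) // S.card = n ∧ Dy n S} =>
        (⟨rot x.1 x.2.1, by rw [rot_card]; exact x.2.2.1⟩ :
          {T : Finset (Fin N) // T.card = n})) := by
    constructor
    · rintro ⟨u, S, hS, hDy⟩ ⟨u', S', hS', hDy'⟩ h
      simp only [Subtype.mk_eq_mk] at h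
      -- both rotations of S
      have hS'eq : S' = rot (u + -u') S := by
        have := congrArg (rot (-u')) h
        rw [rot_rot, rot_rot, add_neg_cancel, rot_zero] at this
        exact this.symm
      have huniq := exists_unique_rot hcop S hS
      obtain ⟨v, _, hv⟩ := huniq
      have h1 : (0 : Fin N) = v := hv 0 (show Dy n (rot 0 S) by rw [rot_zero]; exact hDy)
      have h2 : u + -u' = v := hv _ (show Dy n (rot (u + -u') S) by rw [← hS'eq]; exact hDy')
      have huu : u = u' := by
        have : u + -u' = 0 := by rw [h2, ← h1]
        have := congrArg (· + u') this
        simpa using this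
      subst huu
      have hSS : S = S' := by
        have := congrArg (rot (-u)) h
        rw [rot_rot, rot_rot, add_neg_cancel, rot_zero, rot_zero] at this
        exact this
      subst hSS
      rfl
    · rintro ⟨T, hT⟩
      obtain ⟨u, hu, _⟩ := exists_unique_rot hcop T hT
      refine ⟨⟨-u, ⟨rot u T, by rw [rot_card]; exact hT, hu⟩⟩, ?_⟩
      simp only [Subtype.mk_eq_mk]
      rw [rot_rot, add_neg_cancel, rot_zero]
  have hcard := Nat.card_eq_of_bijective _ hbij
  rw [Nat.card_prod] at hcard
  rw [Nat.card_eq_fintype_card (α := Fin N), Fintype.card_fin] at hcard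
  rw [hcard, Nat.card_eq_fintype_card, Fintype.card_finset_len, Fintype.card_fin]

lemma cnt_eq {S : Finset (Fin N)} {a : ℕ} (ha : a ≤ N) :
    cnt S a = (S.filter fun z => z.val < a).card := by
  unfold cnt
  refine Finset.card_bij (fun x _ => ((x : Fin N))) ?_ ?_ ?_
  · intro x hx
    simp only [Finset.mem_filter, Finset.mem_range] at hx
    simp only [Finset.mem_filter]
    exact ⟨hx.2, by rw [Fin.val_natCast, Nat.mod_eq_of_lt (by omega)]; exact hx.1⟩
  · intro x hx y hy h
    simp only [Finset.mem_filter, Finset.mem_range] at hx hy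
    have := congrArg Fin.val h
    rwa [Fin.val_natCast, Fin.val_natCast, Nat.mod_eq_of_lt (by omega),
      Nat.mod_eq_of_lt (by omega)] at this
  · intro z hz
    simp only [Finset.mem_filter] at hz
    refine ⟨z.val, ?_, Fin.cast_val_eq_self z⟩
    simp only [Finset.mem_filter, Finset.mem_range]
    exact ⟨hz.2, by rw [Fin.cast_val_eq_self]; exact hz.1⟩

end RatCat

section Parking

open Finset RatCat

/-- slope condition from the parking condition, for monotone words -/
lemma slope_of_parking {m n : ℕ} {p : Fin n → ℕ}
    (hp : IsParkingWord m n p) (hmono : Monotone p) (j : Fin n) :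
    n * p j ≤ m * j.val := by
  by_contra hcon
  push_neg at hcon
  have hpj : 1 ≤ p j := by
    rcases Nat.eq_zero_or_pos (p j) with h0 | h0
    · rw [h0] at hcon; omega
    · exact h0
  have hle : p j ≤ m := le_of_lt (hp.1 j)
  have h2 := hp.2 (p j) hpj hle
  have hsub : (Finset.univ.filter fun k => p k < p j) ⊆ Finset.Iio j := by
    intro k hk
    simp only [Finset.mem_filter] at hk
    rw [Finset.mem_Iio]
    by_contra hkj
    push_neg at hkj
    exact absurd (hmono hkj) (by omega)
  have hc : (Finset.univ.filter fun k => p k < p j).card ≤ j.val := by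
    have := Finset.card_le_card hsub
    rwa [Fin.card_Iio] at this
  have hfin : p j * n ≤ m * j.val :=
    le_trans h2 (Nat.mul_le_mul_left m hc)
  have hcomm : p j * n = n * p j := mul_comm _ _
  omega

lemma parking_of_slope {m n : ℕ} (hm : 0 < m) (hn : 0 < n) {p : Fin n → ℕ}
    (hmono : Monotone p) (hs : ∀ j : Fin n, n * p j ≤ m * j.val) :
    IsParkingWord m n p := by
  have hlt : ∀ j, p j < m := by
    intro j
    have h1 := hs j
    have h2 : m * j.val < m * n := mul_lt_mul_of_pos_left j.isLt hm
    have h3 : n * p j < m * n := lt_of_le_of_lt h1 h2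
    rw [mul_comm m n] at h3
    exact Nat.lt_of_mul_lt_mul_left h3
  refine ⟨hlt, ?_⟩
  intro i hi1 him
  set c := (Finset.univ.filter fun k => p k < i).card with hc
  have hcn : c ≤ n := by
    have := Finset.card_filter_le (Finset.univ : Finset (Fin n)) (fun k => p k < i)
    simpa using this
  rcases eq_or_lt_of_le hcn with hceq | hclt
  · rw [hceq]
    exact Nat.mul_le_mul_right n him
  · set jc : Fin n := ⟨c, hclt⟩ with hjc
    have hjcge : i ≤ p jc := by
      by_contra hcon
      push_neg at hcon
      have hsub : Finset.Iic jc ⊆ Finset.univ.filter fun k => p k < i := by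
        intro k hk
        rw [Finset.mem_Iic] at hk
        simp only [Finset.mem_filter, Finset.mem_univ, true_and]
        exact lt_of_le_of_lt (hmono hk) hcon
      have hcard := Finset.card_le_card hsub
      rw [Fin.card_Iic] at hcard
      rw [show (jc : Fin n).val = c from rfl] at hcard
      omega
    have h1 : i * n ≤ p jc * n := Nat.mul_le_mul_right n hjcge
    have h2 : n * p jc ≤ m * jc.val := hs jc
    rw [show (jc : Fin n).val = c from rfl] at h2
    have h3 : p jc * n = n * p jc := mul_comm _ _
    omega

section Bij

open Finset RatCat

private lemma aux_sm_gap_aux {q : ℕ} {g : Fin q → ℕ} (hg : StrictMono g) :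
    ∀ d (j k : Fin q), k.val = j.val + d → g j + d ≤ g k := by
  intro d
  induction d with
  | zero =>
    intro j k h
    have : k = j := Fin.ext (by omega)
    subst this; omega
  | succ d ih =>
    intro j k h
    have hklt : j.val + d < q := by have := k.isLt; omega
    have h1 := ih j ⟨j.val + d, hklt⟩ rfl
    have h2 : g ⟨j.val + d, hklt⟩ < g k := hg (show (⟨j.val + d, hklt⟩ : Fin q) < k from by
      rw [Fin.lt_def]; simp; omega)
    omega

private lemma aux_sm_gap {q : ℕ} {g : Fin q → ℕ} (hg : StrictMono g) {j k : Fin q}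
    (h : j ≤ k) : g j + (k.val - j.val) ≤ g k := by
  have hjk := Fin.le_def.mp h
  exact aux_sm_gap_aux hg (k.val - j.val) j k (by omega)

private lemma aux_sm_le {q : ℕ} {g : Fin q → ℕ} (hg : StrictMono g) (j : Fin q) :
    j.val ≤ g j := by
  have hq : 0 < q := lt_of_le_of_lt (Nat.zero_le _) j.isLt
  have h0 : (⟨0, hq⟩ : Fin q) ≤ j := by rw [Fin.le_def]; simp
  have := aux_sm_gap hg h0
  simp at this
  omega

/-- the subset of `Fin (m+n)` associated to a parking word -/
def pk (m n : ℕ) [NeZero (m + n)] (p : Fin n → ℕ) : Finset (Fin (m + n)) :=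
  Finset.image (fun j : Fin n => ((p j + j.val : ℕ) : Fin (m + n))) Finset.univ

variable {m n : ℕ} [NeZero (m + n)]

lemma park_to_dyck (hm : 0 < m) (hn : 0 < n) {p : Fin n → ℕ}
    (hp : IsParkingWord m n p) (hmono : Monotone p) :
    (pk m n p).card = n ∧ Dy n (pk m n p) := by
  have hslope := slope_of_parking hp hmono
  have hb : ∀ j : Fin n, p j + j.val < m + n := fun j => by
    have := hp.1 j; have := j.isLt; omega
  have hval : ∀ j : Fin n, ((p j + j.val : ℕ) : Fin (m + n)).val = p j + j.val :=
    fun j => Fin.val_cast_of_lt (hb j)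
  have hsm : StrictMono (fun j : Fin n => p j + j.val) := by
    intro j k hjk
    have h1 := hmono (le_of_lt hjk)
    have h2 := Fin.lt_def.mp hjk
    simp only
    omega
  have hinj : Function.Injective (fun j : Fin n => ((p j + j.val : ℕ) : Fin (m + n))) := by
    intro j k h
    have h2 := congrArg Fin.val h
    simp only [hval j, hval k] at h2
    exact hsm.injective h2
  constructor
  · rw [pk, Finset.card_image_of_injective _ hinj, Finset.card_univ, Fintype.card_fin]
  · intro x hx
    rw [pk, Finset.mem_image] at hx
    obtain ⟨j, _, rfl⟩ := hx
    rw [hval j]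
    unfold Hf
    have hcnt : cnt (pk m n p) (p j + j.val) = j.val := by
      rw [cnt_eq (le_of_lt (hb j)), pk, Finset.filter_image,
        Finset.card_image_of_injective _ hinj]
      have hset : (Finset.univ.filter fun k : Fin n =>
          (((p k + k.val : ℕ) : Fin (m + n))).val < p j + j.val) = Finset.Iio j := by
        ext k
        simp only [Finset.mem_filter, Finset.mem_univ, true_and, Finset.mem_Iio, hval k]
        constructor
        · intro h
          by_contra hk
          push_neg at hk
          exact absurd h (not_lt.mpr (hsm.monotone hk))
        · intro h
          exact hsm h
      rw [hset, Fin.card_Iio]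
    rw [hcnt]
    have hkey : n * (p j + j.val) ≤ (m + n) * j.val := by
      calc n * (p j + j.val) = n * p j + n * j.val := by ring
        _ ≤ m * j.val + n * j.val := Nat.add_le_add_right (hslope j) _
        _ = (m + n) * j.val := by ring
    have hkey' := (Int.ofNat_le.mpr hkey)
    push_cast at hkey' ⊢
    linarith

lemma dyck_to_park (hm : 0 < m) (hn : 0 < n) {S : Finset (Fin (m + n))}
    (hS : S.card = n) (hDy : Dy n S) :
    ∃ p : Fin n → ℕ, (IsParkingWord m n p ∧ Monotone p) ∧ pk m n p = S := by
  set e := S.orderEmbOfFin hS with he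
  have hesm : StrictMono (fun j : Fin n => (e j).val) := by
    intro j k h
    have := e.strictMono h
    rwa [Fin.lt_def] at this
  have hle : ∀ j : Fin n, j.val ≤ (e j).val := aux_sm_le hesm
  set p : Fin n → ℕ := fun j => (e j).val - j.val with hp
  have hmono : Monotone p := by
    intro j k hjk
    have h1 := aux_sm_gap hesm hjk
    have h2 := hle j
    have h3 := Fin.le_def.mp hjk
    simp only [hp]
    omega
  have hcnt : ∀ j : Fin n, cnt S ((e j).val) = j.val := by
    intro j
    rw [cnt_eq (le_of_lt (e j).isLt)]
    have hset : S.filter (fun z => z.val < (e j).val) = Finset.image e (Finset.Iio j) := by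
      ext z
      simp only [Finset.mem_filter, Finset.mem_image, Finset.mem_Iio]
      constructor
      · rintro ⟨hzS, hzlt⟩
        have hz : z ∈ Set.range e := by
          rw [Finset.range_orderEmbOfFin]
          exact hzS
        obtain ⟨k, rfl⟩ := hz
        refine ⟨k, ?_, rfl⟩
        by_contra hk
        push_neg at hk
        have := hesm.monotone hk
        omega
      · rintro ⟨k, hk, rfl⟩
        exact ⟨Finset.orderEmbOfFin_mem S hS k, hesm hk⟩
    rw [hset, Finset.card_image_of_injective _ e.injective, Fin.card_Iio]
  have hslope : ∀ j : Fin n, n * p j ≤ m * j.val := by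
    intro j
    have h0 := hDy (e j) (Finset.orderEmbOfFin_mem S hS j)
    unfold Hf at h0
    rw [hcnt j] at h0
    have h1 : (n : ℤ) * (e j).val ≤ ((m + n : ℕ) : ℤ) * j.val := by
      push_cast at h0 ⊢
      linarith
    have h2 : n * (e j).val ≤ (m + n) * j.val := by exact_mod_cast h1
    have h3 : (e j).val = p j + j.val := by
      simp only [hp]
      have := hle j
      omega
    rw [h3] at h2
    have h4 : n * p j + n * j.val ≤ m * j.val + n * j.val := by
      calc n * p j + n * j.val = n * (p j + j.val) := by ring
        _ ≤ (m + n) * j.val := h2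
        _ = m * j.val + n * j.val := by ring
    omega
  have himg : ∀ j : Fin n, ((p j + j.val : ℕ) : Fin (m + n)) = e j := by
    intro j
    have h3 : p j + j.val = (e j).val := by
      simp only [hp]
      have := hle j
      omega
    rw [h3, Fin.cast_val_eq_self]
  refine ⟨p, ⟨parking_of_slope hm hn hmono hslope, hmono⟩, ?_⟩
  rw [pk]
  ext z
  simp only [Finset.mem_image, Finset.mem_univ, true_and]
  constructor
  · rintro ⟨j, rfl⟩
    rw [himg j]
    exact Finset.orderEmbOfFin_mem S hS j
  · intro hz
    have hz' : z ∈ Set.range e := by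
      rw [Finset.range_orderEmbOfFin]
      exact hz
    obtain ⟨j, rfl⟩ := hz'
    exact ⟨j, himg j⟩

lemma pk_inj (hm : 0 < m) (hn : 0 < n) {p p' : Fin n → ℕ}
    (hp : IsParkingWord m n p ∧ Monotone p) (hp' : IsParkingWord m n p' ∧ Monotone p')
    (h : pk m n p = pk m n p') : p = p' := by
  have hcard : (pk m n p).card = n := (park_to_dyck hm hn hp.1 hp.2).1
  have key : ∀ (r : Fin n → ℕ), IsParkingWord m n r → Monotone r → pk m n r = pk m n p →
      (fun j : Fin n => ((r j + j.val : ℕ) : Fin (m + n))) = (pk m n p).orderEmbOfFin hcard := by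
    intro r hr hrmono hpk
    apply Finset.orderEmbOfFin_unique
    · intro j
      rw [← hpk, pk]
      exact Finset.mem_image_of_mem _ (Finset.mem_univ j)
    · have hb : ∀ j : Fin n, r j + j.val < m + n := fun j => by
        have := hr.1 j; have := j.isLt; omega
      intro j k hjk
      rw [Fin.lt_def, Fin.val_cast_of_lt (hb j), Fin.val_cast_of_lt (hb k)]
      have h1 := hrmono (le_of_lt hjk)
      have h2 := Fin.lt_def.mp hjk
      omega
  have h1 := key p hp.1 hp.2 rfl
  have h2 := key p' hp'.1 hp'.2 h.symm
  have h3 := h1.trans h2.symm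
  funext j
  have h4 := congrArg (fun f => (f j : Fin (m + n)).val) h3
  simp only at h4
  have hbp : p j + j.val < m + n := by have := hp.1.1 j; have := j.isLt; omega
  have hbp' : p' j + j.val < m + n := by have := hp'.1.1 j; have := j.isLt; omega
  rw [Fin.val_cast_of_lt hbp, Fin.val_cast_of_lt hbp'] at h4
  omega

lemma card_park_eq (hm : 0 < m) (hn : 0 < n) :
    Nat.card {p : Fin n → ℕ // IsParkingWord m n p ∧ Monotone p} =
      Nat.card {S : Finset (Fin (m + n)) // S.card = n ∧ Dy n S} := by
  apply Nat.card_eq_of_bijective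
    (fun x => ⟨pk m n x.1, park_to_dyck hm hn x.2.1 x.2.2⟩)
  constructor
  · rintro ⟨p, hp⟩ ⟨p', hp'⟩ hEq
    simp only [Subtype.mk_eq_mk] at hEq ⊢
    exact pk_inj hm hn hp hp' hEq
  · rintro ⟨S, hS, hDy⟩
    obtain ⟨p, hp, hpk⟩ := dyck_to_park hm hn hS hDy
    exact ⟨⟨p, hp⟩, Subtype.ext hpk⟩

end Bij

end Parking

theorem card_dyck_words (m n : ℕ) (hm : 0 < m) (hn : 0 < n)
    (hcop : Nat.Coprime m n) :
    (m + n) * Nat.card {p : Fin n → ℕ // IsParkingWord m n p ∧ Monotone p} =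
      (m + n).choose n := by
  haveI : NeZero (m + n) := ⟨by omega⟩
  have hcop2 : Nat.Coprime n (m + n) := by
    rw [Nat.coprime_add_self_right]
    exact hcop.symm
  rw [card_park_eq hm hn]
  exact RatCat.rot_count hcop2
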